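/- Let θ and λ be formal parameters and define the formal power series φ(θ; x) = ∑_{k≥1} (x^k / k!) * ∏_{a=1}^{k-1}(kθ - a). Then exp(λ·φ(θ; x)) = 1 + λ ∑_{n≥1} (x^n / n!) * ∏_{a=1}^{n-1}(λ + nθ - a) as formal power series in x with coefficients in ℚ[θ, λ]. -/

import Mathlib

open PowerSeries Finset

/-- Formal exponential of a power series (intended for series with zero constant term):
the `n`-th coefficient of `exp f` is `∑_{j≤n} coeff n (f^j) / j!`, which for
`f` with zero constant term agrees with `∑_j f^j / j!`. -/
noncomputable def expPS {R : Type*} [CommRing R] [Algebra ℚ R] (f : PowerSeries R) :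
    PowerSeries R :=
  PowerSeries.mk fun n =>
    ∑ j ∈ Finset.range (n + 1), ((1 : ℚ) / j.factorial) • (PowerSeries.coeff (R := R) n (f ^ j))

/-- The coefficient ring `ℚ[θ, λ]`: `θ = X 0`, `λ = X 1`. -/
abbrev RTL : Type := MvPolynomial (Fin 2) ℚ

/-- `φ(θ; x) = ∑_{k≥1} (x^k/k!) ∏_{a=1}^{k-1} (kθ - a)`. -/
noncomputable def phiθ : PowerSeries RTL :=
  PowerSeries.mk fun k =>
    if k = 0 then 0 else
      MvPolynomial.C ((1 : ℚ) / k.factorial) *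
        ∏ a ∈ Finset.range (k - 1),
          ((k : RTL) * MvPolynomial.X 0 - ((a : RTL) + 1))

/-! ### Rothe–Hagen polynomials -/

section RotheDefs

variable {R S : Type*} [CommRing R] [CommRing S]

/-- `Bp t i y = ∏_{a=1}^{i} (y + i t - a)`. -/
def Bp (t : R) (i : ℕ) (y : R) : R :=
  ∏ a ∈ Finset.range i, (y + (i : R) * t - ((a : R) + 1))

/-- `Ap t j x = x ∏_{a=1}^{j-1} (x + j t - a)` with `Ap t 0 x = 1`. -/
def Ap (t : R) : ℕ → R → R
  | 0, _ => 1
  | (j+1), x => x * Bp t j (x + t)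

@[simp] lemma Bp_zero (t y : R) : Bp t 0 y = 1 := by simp [Bp]

@[simp] lemma Ap_zero (t x : R) : Ap t 0 x = 1 := rfl

lemma Ap_succ (t x : R) (j : ℕ) : Ap t (j + 1) x = x * Bp t j (x + t) := rfl

lemma map_Bp (f : R →+* S) (t : R) (i : ℕ) (y : R) : f (Bp t i y) = Bp (f t) i (f y) := by
  simp [Bp, map_prod]

lemma map_Ap (f : R →+* S) (t : R) (j : ℕ) (x : R) : f (Ap t j x) = Ap (f t) j (f x) := by
  cases j with
  | zero => simp
  | succ j => simp [Ap_succ, map_Bp]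

/-- Splitting off the last factor. -/
lemma Bp_top (t y : R) (i : ℕ) :
    Bp t (i + 1) y = Bp t i (y + t) * (y + ((i : R) + 1) * t - ((i : R) + 1)) := by
  rw [Bp, Finset.prod_range_succ]
  congr 1
  · rw [Bp]; apply Finset.prod_congr rfl; intro a _; push_cast; ring
  · push_cast; ring

/-- Splitting off the first factor after shift by 1. -/
lemma Bp_bot (t y : R) (i : ℕ) :
    Bp t (i + 1) (y + 1) = (y + ((i : R) + 1) * t) * Bp t i (y + t) := by
  rw [Bp, Finset.prod_range_succ', mul_comm]
  congr 1
  · push_cast; ring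
  · rw [Bp]; apply Finset.prod_congr rfl; intro a _; push_cast; ring

/-- Finite difference of `Bp` in `y`. -/
lemma Bp_diff (t y : R) (i : ℕ) :
    Bp t (i + 1) (y + 1) = Bp t (i + 1) y + ((i : R) + 1) * Bp t i (y + t) := by
  rw [Bp_bot, Bp_top]; ring

/-- Finite difference of `Ap` in `x`. -/
lemma Ap_diff (t x : R) (j : ℕ) :
    Ap t (j + 1) (x + 1) = Ap t (j + 1) x + ((j : R) + 1) * Ap t j (x + t) := by
  cases j with
  | zero => simp [Ap_succ]
  | succ j =>
    rw [Ap_succ, Ap_succ, Ap_succ]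
    have h1 : x + 1 + t = (x + t) + 1 := by ring
    rw [h1, Bp_bot]
    rw [Bp_top t (x + t) j]
    have h2 : x + t + t = x + 2 * t := by ring
    rw [h2]
    push_cast
    ring

end RotheDefs

/-! ### The Rothe–Hagen identity -/

section Rothe

/-- generic `t` and `y` -/
local notation "tG" => (Polynomial.C (MvPolynomial.X 0) : Polynomial RTL)
local notation "yG" => (Polynomial.C (MvPolynomial.X 1) : Polynomial RTL)

lemma poly_eq_zero_of_shift (D : Polynomial RTL)
    (hshift : D.comp (Polynomial.X + 1) = D) (h0 : D.eval 0 = 0) : D = 0 := by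
  have key : ∀ n : ℕ, D.eval (n : RTL) = 0 := by
    intro n
    induction n with
    | zero => simpa using h0
    | succ n ih =>
      have h := congrArg (Polynomial.eval (n : RTL)) hshift
      rw [Polynomial.eval_comp] at h
      simp only [Polynomial.eval_add, Polynomial.eval_X, Polynomial.eval_one] at h
      rw [Nat.cast_succ, h, ih]
  apply Polynomial.eq_zero_of_infinite_isRoot
  exact Set.infinite_of_injective_forall_mem (f := fun n : ℕ => (n : RTL))
    Nat.cast_injective (fun n => key n)

theorem rothe (m : ℕ) :
    ∑ j ∈ Finset.range (m + 1),
      (m.choose j : Polynomial RTL) * Ap tG j Polynomial.X * Bp tG (m - j) yG =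
      Bp tG m (Polynomial.X + yG) := by
  induction m with
  | zero => simp [Bp]
  | succ m ih =>
    -- shifted instance of the inductive hypothesis
    have ihτ : ∑ j ∈ Finset.range (m + 1),
        (m.choose j : Polynomial RTL) * Ap tG j (Polynomial.X + tG) * Bp tG (m - j) yG =
        Bp tG m (Polynomial.X + tG + yG) := by
      have h := congrArg (Polynomial.compRingHom (Polynomial.X + tG)) ih
      simp only [map_sum, map_mul, map_add, map_natCast, map_Ap, map_Bp,
        Polynomial.coe_compRingHom_apply, Polynomial.C_comp, Polynomial.X_comp,
        Polynomial.add_comp] at h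
      exact h
    set L : Polynomial RTL := ∑ j ∈ Finset.range (m + 1 + 1),
      ((m+1).choose j : Polynomial RTL) * Ap tG j Polynomial.X * Bp tG (m + 1 - j) yG with hL
    set Rr : Polynomial RTL := Bp tG (m + 1) (Polynomial.X + yG) with hR
    clear_value L Rr
    have hψL : L.comp (Polynomial.X + 1) =
        L + ((m : Polynomial RTL) + 1) * Bp tG m (Polynomial.X + tG + yG) := by
      have h1 : L.comp (Polynomial.X + 1) = ∑ j ∈ Finset.range (m + 1 + 1),
          ((m+1).choose j : Polynomial RTL) * Ap tG j (Polynomial.X + 1) *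
            Bp tG (m + 1 - j) yG := by
        rw [hL, ← Polynomial.coe_compRingHom_apply, map_sum]
        refine Finset.sum_congr rfl fun j _ => ?_
        simp only [map_mul, map_add, map_one, map_natCast, map_Ap, map_Bp,
          Polynomial.coe_compRingHom_apply, Polynomial.C_comp, Polynomial.X_comp]
      have h2 : ∀ j ∈ Finset.range (m + 1 + 1),
          ((m+1).choose j : Polynomial RTL) * Ap tG j (Polynomial.X + 1) *
            Bp tG (m + 1 - j) yG
          = ((m+1).choose j : Polynomial RTL) * Ap tG j Polynomial.X * Bp tG (m + 1 - j) yG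
            + ((m+1).choose j : Polynomial RTL) *
              ((j : Polynomial RTL) * Ap tG (j - 1) (Polynomial.X + tG)) *
              Bp tG (m + 1 - j) yG := by
        intro j _
        cases j with
        | zero => simp
        | succ i =>
          rw [Ap_diff]
          simp only [Nat.add_sub_cancel]
          push_cast
          ring
      rw [h1, Finset.sum_congr rfl h2, Finset.sum_add_distrib]
      rw [hL]
      refine congrArg₂ (· + ·) rfl ?_
      rw [Finset.sum_range_succ']
      simp only [Nat.cast_zero, zero_mul, mul_zero, add_zero]
      rw [← ihτ, Finset.mul_sum]
      refine Finset.sum_congr rfl fun i _ => ?_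
      have hnat : (m+1).choose (i+1) * (i+1) = (m+1) * m.choose i :=
        (Nat.add_one_mul_choose_eq m i).symm
      have hc := congrArg (Nat.cast : ℕ → Polynomial RTL) hnat
      push_cast at hc
      have hms : m + 1 - (i + 1) = m - i := by omega
      rw [hms]
      simp only [Nat.add_sub_cancel]
      push_cast
      linear_combination (Ap tG i (Polynomial.X + tG) * Bp tG (m - i) yG) * hc
    have hψR : Rr.comp (Polynomial.X + 1) =
        Rr + ((m : Polynomial RTL) + 1) * Bp tG m (Polynomial.X + tG + yG) := by
      rw [hR, ← Polynomial.coe_compRingHom_apply, map_Bp]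
      simp only [map_add, map_one, Polynomial.coe_compRingHom_apply, Polynomial.C_comp,
        Polynomial.X_comp]
      have harg : Polynomial.X + 1 + yG = (Polynomial.X + yG) + 1 := by ring
      rw [harg, Bp_diff]
      have h2 : Polynomial.X + yG + tG = Polynomial.X + tG + yG := by ring
      rw [h2]
    have hzero : (L - Rr).comp (Polynomial.X + 1) = L - Rr := by
      rw [Polynomial.sub_comp, hψL, hψR]
      abel
    have heval : (L - Rr).eval 0 = 0 := by
      have hL0 : L.eval 0 = Bp (MvPolynomial.X 0 : RTL) (m+1) (MvPolynomial.X 1) := by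
        rw [hL, ← Polynomial.coe_evalRingHom, map_sum, Finset.sum_eq_single 0]
        · simp only [map_mul, map_natCast, map_Ap, map_Bp, Polynomial.coe_evalRingHom,
            Polynomial.eval_C, Polynomial.eval_X]
          simp
        · intro j _ hj
          obtain ⟨i, rfl⟩ := Nat.exists_eq_succ_of_ne_zero hj
          simp only [map_mul, map_natCast, map_Ap, map_Bp, Polynomial.coe_evalRingHom,
            Polynomial.eval_C, Polynomial.eval_X]
          simp [Ap_succ]
        · intro h; simp at h
      have hR0 : Rr.eval 0 = Bp (MvPolynomial.X 0 : RTL) (m+1) (MvPolynomial.X 1) := by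
        rw [hR, ← Polynomial.coe_evalRingHom, map_Bp]
        simp [Polynomial.coe_evalRingHom]
      rw [Polynomial.eval_sub, hL0, hR0, sub_self]
    exact sub_eq_zero.mp (poly_eq_zero_of_shift _ hzero heval)

/-- Specialisation of the Rothe identity at `t = θ`, `x = λ`, `y = θ`. -/
lemma rothe_inst (n : ℕ) :
    ∑ j ∈ Finset.range (n + 1),
      (n.choose j : RTL) * Ap (MvPolynomial.X 0) j (MvPolynomial.X 1) *
        Bp (MvPolynomial.X 0) (n - j) (MvPolynomial.X 0) =
      Bp (MvPolynomial.X 0) n (MvPolynomial.X 1 + MvPolynomial.X 0) := by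
  have h := congrArg (Polynomial.eval₂RingHom
      ((MvPolynomial.aeval fun _ : Fin 2 => (MvPolynomial.X 0 : RTL)) : RTL →ₐ[ℚ] RTL).toRingHom
      (MvPolynomial.X 1 : RTL)) (rothe n)
  simp only [map_sum, map_mul, map_add, map_natCast, map_Ap, map_Bp,
    Polynomial.coe_eval₂RingHom, Polynomial.eval₂_C, Polynomial.eval₂_X,
    AlgHom.toRingHom_eq_coe, AlgHom.coe_toRingHom, MvPolynomial.aeval_X] at h
  exact h

end Rothe

section Main

/-- The power series `λ · φ(θ; x)`. -/
noncomputable def fJ : PowerSeries RTL := PowerSeries.C (R := RTL) (MvPolynomial.X 1) * phiθ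

/-- The claimed coefficients of `exp (λ φ)`. -/
noncomputable def qq (n : ℕ) : RTL :=
  MvPolynomial.C ((1:ℚ)/n.factorial) * Ap (MvPolynomial.X 0) n (MvPolynomial.X 1)

lemma fJ_const : constantCoeff (R := RTL) fJ = 0 := by
  rw [fJ, map_mul]
  have : constantCoeff (R := RTL) phiθ = 0 := by
    rw [phiθ, ← PowerSeries.coeff_zero_eq_constantCoeff_apply, PowerSeries.coeff_mk]
    simp
  rw [this, mul_zero]

lemma coeff_fJ (k : ℕ) :
    PowerSeries.coeff (R := RTL) (k+1) fJ = MvPolynomial.X 1 *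
      (MvPolynomial.C ((1:ℚ)/(k+1).factorial) *
        Bp (MvPolynomial.X 0) k (MvPolynomial.X 0)) := by
  rw [fJ, PowerSeries.coeff_C_mul, phiθ, PowerSeries.coeff_mk]
  simp only [Nat.succ_ne_zero, if_false, Nat.add_sub_cancel]
  have : ∏ a ∈ Finset.range k, (((k+1 : ℕ) : RTL) * MvPolynomial.X 0 - ((a : RTL) + 1)) =
      Bp (MvPolynomial.X 0) k (MvPolynomial.X 0) := by
    rw [Bp]
    refine Finset.prod_congr rfl fun a _ => ?_
    push_cast
    ring
  rw [← this]

lemma coeff_pow_fJ {i m : ℕ} (h : m < i) : PowerSeries.coeff (R := RTL) m (fJ ^ i) = 0 := by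
  have hX : (PowerSeries.X : PowerSeries RTL) ∣ fJ := PowerSeries.X_dvd_iff.mpr fJ_const
  have hXi : (PowerSeries.X ^ i : PowerSeries RTL) ∣ fJ ^ i := pow_dvd_pow_of_dvd hX i
  exact (PowerSeries.X_pow_dvd_iff.mp hXi) m h

/-- The recurrence satisfied by the claimed coefficients, from the Rothe identity. -/
lemma recStarR (n : ℕ) :
    ((n : RTL) + 1) * qq (n+1) =
      ∑ k ∈ Finset.range (n+1),
        (((k : RTL) + 1) * PowerSeries.coeff (R := RTL) (k+1) fJ) * qq (n-k) := by
  have hterm : ∀ k ∈ Finset.range (n+1),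
      (((k : RTL) + 1) * PowerSeries.coeff (R := RTL) (k+1) fJ) * qq (n-k)
      = (MvPolynomial.C ((1:ℚ)/n.factorial) * MvPolynomial.X 1) *
          ((n.choose k : RTL) * Ap (MvPolynomial.X 0) (n-k) (MvPolynomial.X 1) *
            Bp (MvPolynomial.X 0) k (MvPolynomial.X 0)) := by
    intro k hk
    have hkn : k ≤ n := Nat.lt_succ_iff.mp (Finset.mem_range.mp hk)
    rw [coeff_fJ, qq]
    have hs : (((k:ℚ)+1) * ((1:ℚ)/(k+1).factorial)) * ((1:ℚ)/(n-k).factorial)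
        = (n.choose k : ℚ) * ((1:ℚ)/n.factorial) := by
      rw [Nat.cast_choose ℚ hkn, Nat.factorial_succ]
      have h1 : ((k.factorial : ℚ)) ≠ 0 := Nat.cast_ne_zero.mpr k.factorial_ne_zero
      have h2 : (((n-k).factorial : ℚ)) ≠ 0 := Nat.cast_ne_zero.mpr (n-k).factorial_ne_zero
      have h3 : ((n.factorial : ℚ)) ≠ 0 := Nat.cast_ne_zero.mpr n.factorial_ne_zero
      push_cast
      field_simp
    have hC := congrArg (MvPolynomial.C : ℚ → RTL) hs
    simp only [map_mul, map_add, map_natCast, map_one, map_div₀, MvPolynomial.C_1] at hC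
    linear_combination (MvPolynomial.X 1 * Bp (MvPolynomial.X 0) k (MvPolynomial.X 0) *
      Ap (MvPolynomial.X 0) (n-k) (MvPolynomial.X 1)) * hC
  rw [Finset.sum_congr rfl hterm, ← Finset.mul_sum]
  have hrefl : ∑ k ∈ Finset.range (n+1),
      (n.choose k : RTL) * Ap (MvPolynomial.X 0) (n-k) (MvPolynomial.X 1) *
        Bp (MvPolynomial.X 0) k (MvPolynomial.X 0)
      = ∑ j ∈ Finset.range (n+1),
      (n.choose j : RTL) * Ap (MvPolynomial.X 0) j (MvPolynomial.X 1) *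
        Bp (MvPolynomial.X 0) (n-j) (MvPolynomial.X 0) := by
    rw [← Finset.sum_range_reflect]
    refine Finset.sum_congr rfl fun j hj => ?_
    have hj' : j ≤ n := Nat.lt_succ_iff.mp (Finset.mem_range.mp hj)
    have e1 : n + 1 - 1 - j = n - j := by omega
    rw [e1, Nat.choose_symm hj', Nat.sub_sub_self hj']
  rw [hrefl, rothe_inst]
  rw [qq, Ap_succ]
  have hs2 : ((n:ℚ)+1) * ((1:ℚ)/(n+1).factorial) = (1:ℚ)/n.factorial := by
    rw [Nat.factorial_succ]
    have h3 : ((n.factorial : ℚ)) ≠ 0 := Nat.cast_ne_zero.mpr n.factorial_ne_zero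
    push_cast
    field_simp
  have hC := congrArg (MvPolynomial.C : ℚ → RTL) hs2
  simp only [map_mul, map_add, map_natCast, map_one, map_div₀, MvPolynomial.C_1] at hC
  linear_combination (MvPolynomial.X 1 *
    Bp (MvPolynomial.X 0) n (MvPolynomial.X 1 + MvPolynomial.X 0)) * hC

/-- The recurrence satisfied by the coefficients of `expPS fJ`. -/
lemma recStarL (n : ℕ) :
    ((n : RTL) + 1) * PowerSeries.coeff (R := RTL) (n+1) (expPS fJ) =
      ∑ k ∈ Finset.range (n+1),
        (((k : RTL) + 1) * PowerSeries.coeff (R := RTL) (k+1) fJ) *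
          PowerSeries.coeff (R := RTL) (n-k) (expPS fJ) := by
  have hL : ((n : RTL) + 1) * PowerSeries.coeff (R := RTL) (n+1) (expPS fJ)
      = ∑ i ∈ Finset.range (n+1),
          ((1:ℚ)/i.factorial) • PowerSeries.coeff (R := RTL) n (fJ ^ i * d⁄dX RTL fJ) := by
    rw [expPS, PowerSeries.coeff_mk, Finset.mul_sum]
    have hterm : ∀ j, ((n : RTL) + 1) * (((1:ℚ)/j.factorial) • PowerSeries.coeff (R := RTL) (n+1) (fJ ^ j))
        = ((1:ℚ)/j.factorial) • (((n : RTL) + 1) * PowerSeries.coeff (R := RTL) (n+1) (fJ ^ j)) :=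
      fun j => mul_smul_comm _ _ _
    simp only [hterm]
    rw [Finset.sum_range_succ']
    have h0 : ((1:ℚ)/(Nat.factorial 0)) • (((n : RTL) + 1) *
        PowerSeries.coeff (R := RTL) (n+1) (fJ ^ 0)) = 0 := by
      simp [PowerSeries.coeff_one]
    rw [h0, add_zero]
    refine Finset.sum_congr rfl fun i _ => ?_
    have hd : ((n : RTL) + 1) * PowerSeries.coeff (R := RTL) (n+1) (fJ ^ (i+1))
        = ((i:ℚ)+1) • PowerSeries.coeff (R := RTL) n (fJ ^ i * d⁄dX RTL fJ) := by
      have h1 : PowerSeries.coeff (R := RTL) n (d⁄dX RTL (fJ ^ (i+1)))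
          = PowerSeries.coeff (R := RTL) (n+1) (fJ ^ (i+1)) * (((n:RTL)) + 1) := by
        rw [PowerSeries.coeff_derivative]
      have h2 : d⁄dX RTL (fJ ^ (i+1)) = (i+1) • (fJ ^ i * d⁄dX RTL fJ) := by
        rw [Derivation.leibniz_pow]
        simp only [Nat.add_sub_cancel, smul_eq_mul, smul_assoc]
      rw [mul_comm, ← h1, h2, map_nsmul, ← Nat.cast_smul_eq_nsmul ℚ]
      push_cast
      ring_nf
    rw [hd, smul_smul]
    congr 1
    rw [Nat.factorial_succ]
    have h1 : ((i.factorial : ℚ)) ≠ 0 := Nat.cast_ne_zero.mpr i.factorial_ne_zero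
    push_cast
    try field_simp
    try ring
  rw [hL]
  have hco : ∀ k : ℕ, ((k : RTL) + 1) * PowerSeries.coeff (R := RTL) (k+1) fJ
      = PowerSeries.coeff (R := RTL) k (d⁄dX RTL fJ) := by
    intro k
    rw [PowerSeries.coeff_derivative]
    ring
  calc ∑ i ∈ Finset.range (n+1),
          ((1:ℚ)/i.factorial) • PowerSeries.coeff (R := RTL) n (fJ ^ i * d⁄dX RTL fJ)
      = ∑ i ∈ Finset.range (n+1), ∑ k ∈ Finset.range (n+1),
          PowerSeries.coeff (R := RTL) k (d⁄dX RTL fJ) *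
            (((1:ℚ)/i.factorial) • PowerSeries.coeff (R := RTL) (n-k) (fJ ^ i)) := by
        refine Finset.sum_congr rfl fun i _ => ?_
        rw [mul_comm (fJ ^ i), PowerSeries.coeff_mul,
          Finset.Nat.sum_antidiagonal_eq_sum_range_succ_mk, Finset.smul_sum]
        refine Finset.sum_congr rfl fun k _ => ?_
        rw [mul_smul_comm]
    _ = ∑ k ∈ Finset.range (n+1), ∑ i ∈ Finset.range (n+1),
          PowerSeries.coeff (R := RTL) k (d⁄dX RTL fJ) *
            (((1:ℚ)/i.factorial) • PowerSeries.coeff (R := RTL) (n-k) (fJ ^ i)) :=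
        Finset.sum_comm
    _ = ∑ k ∈ Finset.range (n+1),
        (((k : RTL) + 1) * PowerSeries.coeff (R := RTL) (k+1) fJ) *
          PowerSeries.coeff (R := RTL) (n-k) (expPS fJ) := by
        refine Finset.sum_congr rfl fun k hk => ?_
        rw [hco, expPS, PowerSeries.coeff_mk, Finset.mul_sum]
        have hsub : Finset.range (n-k+1) ⊆ Finset.range (n+1) :=
          Finset.range_subset_range.mpr (by omega)
        rw [← Finset.sum_subset hsub]
        intro i hi hni
        have : n - k < i := by
          simp only [Finset.mem_range] at hi hni
          omega
        rw [coeff_pow_fJ this, smul_zero, mul_zero]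

instance : CharZero RTL := by infer_instance

lemma coeff_expPS_eq (n : ℕ) : PowerSeries.coeff (R := RTL) n (expPS fJ) = qq n := by
  induction n using Nat.strong_induction_on with
  | _ n ih =>
    match n with
    | 0 =>
      rw [expPS, PowerSeries.coeff_mk, qq]
      simp
    | (m+1) =>
      have h3 : ∑ k ∈ Finset.range (m+1),
          (((k : RTL) + 1) * PowerSeries.coeff (R := RTL) (k+1) fJ) *
            PowerSeries.coeff (R := RTL) (m-k) (expPS fJ)
          = ∑ k ∈ Finset.range (m+1),
          (((k : RTL) + 1) * PowerSeries.coeff (R := RTL) (k+1) fJ) * qq (m-k) := by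
        refine Finset.sum_congr rfl fun k hk => ?_
        rw [ih (m-k) (by omega)]
      have hm : ((m : RTL) + 1) * PowerSeries.coeff (R := RTL) (m+1) (expPS fJ)
          = ((m : RTL) + 1) * qq (m+1) := by
        rw [recStarL, h3, ← recStarR]
      have hne : ((m : RTL) + 1) ≠ 0 := by
        have : (((m+1 : ℕ) : RTL)) ≠ 0 := Nat.cast_ne_zero.mpr (Nat.succ_ne_zero m)
        push_cast at this
        exact this
      exact mul_left_cancel₀ hne hm

end Main

theorem exp_lambda_phi :
    expPS (PowerSeries.C (R := RTL) (MvPolynomial.X 1) * phiθ) =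
      1 + PowerSeries.C (R := RTL) (MvPolynomial.X 1) *
        PowerSeries.mk (fun n =>
          if n = 0 then 0 else
            MvPolynomial.C ((1 : ℚ) / n.factorial) *
              ∏ a ∈ Finset.range (n - 1),
                (MvPolynomial.X 1 + (n : RTL) * MvPolynomial.X 0 - ((a : RTL) + 1))) := by
  apply PowerSeries.ext
  intro n
  rw [show PowerSeries.C (R := RTL) (MvPolynomial.X 1) * phiθ = fJ from rfl, coeff_expPS_eq]
  rw [map_add, PowerSeries.coeff_one, PowerSeries.coeff_C_mul, PowerSeries.coeff_mk]
  cases n with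
  | zero =>
    simp [qq]
  | succ m =>
    simp only [Nat.succ_ne_zero, if_false, if_neg, Nat.add_sub_cancel]
    have hprod : ∏ a ∈ Finset.range m,
        (MvPolynomial.X 1 + ((m+1 : ℕ) : RTL) * MvPolynomial.X 0 - ((a : RTL) + 1)) =
        Bp (MvPolynomial.X 0) m (MvPolynomial.X 1 + MvPolynomial.X 0) := by
      rw [Bp]
      refine Finset.prod_congr rfl fun a _ => ?_
      push_cast
      ring
    rw [hprod, qq, Ap_succ]
    ring
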